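/- If a category D has the amalgamation property (every span admits a cocone) and has no maximal objects (for every object X there is a non-isomorphism X → Y), then any two objects of D lying in the same connected component of D admit a cocone (joint embedding within each connected component). -/
import Mathlib


open CategoryTheory

/-- If a category `D` has the amalgamation property (every span
`B ← A → C` admits an object receiving morphisms from `B` and `C`) and has no
maximal objects (every object admits a non-isomorphism out of it), then any two
objects in the same connected component (i.e. related by a zigzag of morphisms)
admit a cocone: there is a common object receiving morphisms from both. -/
theorem stmt_4 {D : Type u} [Category.{v} D]
    (AP : ∀ (A B C : D), (A ⟶ B) → (A ⟶ C) → ∃ (E : D) (_ : B ⟶ E) (_ : C ⟶ E), True)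
    (noMax : ∀ X : D, ∃ (Y : D) (f : X ⟶ Y), ¬IsIso f)
    (X Y : D) (h : Zigzag X Y) :
    ∃ (Z : D) (_ : X ⟶ Z) (_ : Y ⟶ Z), True := by
  induction h with
  | refl => exact ⟨X, 𝟙 X, 𝟙 X, trivial⟩
  | tail hxb zbc ih =>
    obtain ⟨Z, fX, fb, -⟩ := ih
    rename_i b c
    rcases (zbc : Nonempty (b ⟶ c) ∨ Nonempty (c ⟶ b)) with ⟨f⟩ | ⟨g⟩
    all_goals first | obtain ⟨f⟩ := f | obtain ⟨g⟩ := g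
    · obtain ⟨E, gZ, gc, -⟩ := AP b Z c fb f
      exact ⟨E, fX ≫ gZ, gc, trivial⟩
    · exact ⟨Z, fX, g ≫ fb, trivial⟩
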